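/- Let X be a real normed space, T : X → X a bounded linear operator of norm 1, and x a unit vector with ‖Tx‖ = ‖T‖ = 1. If both x and Tx are smooth points of X (i.e., each has a unique norming functional in the dual unit sphere), then for any y ∈ X, x ⊥_B y implies Tx ⊥_B Ty. -/

import Mathlib

def BJOrth {X : Type*} [NormedAddCommGroup X] [NormedSpace ℝ X] (x y : X) : Prop :=
  ∀ lam : ℝ, ‖x + lam • y‖ ≥ ‖x‖

/-- If `x` is a unit vector Birkhoff-James orthogonal to `y`, and `x, y` are linearly
independent, there exists a norming functional of `x` annihilating `y`. -/
lemma exists_norming_ann {X : Type*} [NormedAddCommGroup X] [NormedSpace ℝ X]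
    {x y : X} (hx : ‖x‖ = 1) (hxy : ∀ lam : ℝ, ‖x + lam • y‖ ≥ ‖x‖)
    (hind : LinearIndependent ℝ ![x, y]) :
    ∃ F : X →L[ℝ] ℝ, ‖F‖ = 1 ∧ F x = 1 ∧ F y = 0 := by
  set p := Submodule.span ℝ (Set.range ![x, y]) with hp
  let b : Module.Basis (Fin 2) ℝ p := Module.Basis.span hind
  let φ : p →ₗ[ℝ] ℝ := b.constr ℝ ![(1 : ℝ), 0]
  have hb0 : ((b 0 : p) : X) = x := by exact congrArg Subtype.val (Module.Basis.span_apply hind 0)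
  have hb1 : ((b 1 : p) : X) = y := by exact congrArg Subtype.val (Module.Basis.span_apply hind 1)
  have hφ0 : φ (b 0) = 1 := by simpa [φ] using b.constr_basis ℝ ![(1 : ℝ), 0] 0
  have hφ1 : φ (b 1) = 0 := by simpa [φ] using b.constr_basis ℝ ![(1 : ℝ), 0] 1
  have key : ∀ z : p, |φ z| ≤ ‖(z : X)‖ := by
    intro z
    have hz := b.sum_repr z
    rw [Fin.sum_univ_two] at hz
    set a := b.repr z 0 with ha
    set c := b.repr z 1 with hc
    have hzX : (z : X) = a • x + c • y := by
      rw [← hz]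
      push_cast
      rw [hb0, hb1]
    have hφz : φ z = a := by
      rw [← hz]
      simp [map_add, map_smul, hφ0, hφ1]
    rw [hφz, hzX]
    by_cases haz : a = 0
    · simp [haz]
    · have : a • x + c • y = a • (x + (c / a) • y) := by
        rw [smul_add, smul_smul, mul_div_cancel₀ _ haz]
      rw [this, norm_smul]
      have := hxy (c / a)
      rw [hx] at this
      calc |a| = |a| * 1 := by ring
        _ ≤ ‖a‖ * ‖x + (c / a) • y‖ := by
            apply mul_le_mul_of_nonneg_left this (abs_nonneg a)
  let φc : p →L[ℝ] ℝ := LinearMap.mkContinuous φ 1 (fun z => by simpa using key z)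
  obtain ⟨F, hFe, hFn⟩ := exists_extension_norm_eq p φc
  have hmx : x ∈ p := Submodule.subset_span ⟨0, rfl⟩
  have hmy : y ∈ p := Submodule.subset_span ⟨1, rfl⟩
  have hxb : (⟨x, hmx⟩ : p) = b 0 := Subtype.ext (by rw [hb0])
  have hyb : (⟨y, hmy⟩ : p) = b 1 := Subtype.ext (by rw [hb1])
  have hFx : F x = 1 := by
    have h1 : F x = φc ⟨x, hmx⟩ := hFe ⟨x, hmx⟩
    rw [h1, hxb]
    simpa [φc] using hφ0
  have hFy : F y = 0 := by
    have h1 : F y = φc ⟨y, hmy⟩ := hFe ⟨y, hmy⟩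
    rw [h1, hyb]
    simpa [φc] using hφ1
  refine ⟨F, le_antisymm ?_ ?_, hFx, hFy⟩
  · rw [hFn]
    exact LinearMap.mkContinuous_norm_le φ zero_le_one _
  · have := F.le_opNorm x
    rw [hFx, hx, mul_one] at this
    simpa using this

theorem smooth_points_orth_preserved {X : Type*} [NormedAddCommGroup X] [NormedSpace ℝ X]
    (T : X →L[ℝ] X) (x : X) (hT : ‖T‖ = 1) (hx : ‖x‖ = 1) (hTx : ‖T x‖ = 1)
    (hxs : ∃! f : X →L[ℝ] ℝ, ‖f‖ = 1 ∧ f x = ‖x‖)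
    (hTxs : ∃! g : X →L[ℝ] ℝ, ‖g‖ = 1 ∧ g (T x) = ‖T x‖)
    (y : X) (hxy : BJOrth x y) : BJOrth (T x) (T y) := by
  by_cases hind : LinearIndependent ℝ ![x, y]
  · obtain ⟨F, hFn, hFx, hFy⟩ := exists_norming_ann hx hxy hind
    obtain ⟨f, _, hfu⟩ := hxs
    obtain ⟨g, ⟨hg1, hg2⟩, _⟩ := hTxs
    set G : X →L[ℝ] ℝ := g.comp T with hG
    have hGx : G x = 1 := by rw [hG]; simpa [hTx] using hg2
    have hGn : ‖G‖ = 1 := by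
      refine le_antisymm ?_ ?_
      · calc ‖G‖ ≤ ‖g‖ * ‖T‖ := ContinuousLinearMap.opNorm_comp_le g T
          _ = 1 := by rw [hg1, hT, mul_one]
      · have := G.le_opNorm x
        rw [hGx, hx, mul_one] at this
        simpa using this
    have hFf : F = f := hfu F ⟨hFn, by rw [hx]; exact hFx⟩
    have hGf : G = f := hfu G ⟨hGn, by rw [hx]; exact hGx⟩
    have hGTy : g (T y) = 0 := by
      have : G y = F y := by rw [hFf, hGf]
      simpa [hG, hFy] using this
    intro lam
    have hgval : g (T x + lam • T y) = 1 := by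
      rw [map_add, map_smul, hGTy]
      simpa [hTx] using hg2
    have := g.le_opNorm (T x + lam • T y)
    rw [hg1, one_mul, hgval] at this
    rw [hTx]
    simpa using this
  · rw [LinearIndependent.pair_iff] at hind
    push_neg at hind
    obtain ⟨s, t, hst, hne⟩ := hind
    by_cases ht : t = 0
    · exfalso
      have hs : s ≠ 0 := fun h => hne h ht
      rw [ht, zero_smul, add_zero] at hst
      have : x = 0 := by
        have := smul_eq_zero.mp hst
        tauto
      rw [this, norm_zero] at hx
      exact zero_ne_one hx
    · have hy : y = (-(s / t)) • x := by
        have : t • y = -(s • x) := by linear_combination (norm := module) hst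
        have h2 : y = t⁻¹ • (t • y) := by rw [smul_smul, inv_mul_cancel₀ ht, one_smul]
        rw [this] at h2
        rw [h2]
        rw [smul_neg, smul_smul]
        module
      by_cases hs : s = 0
      · have hy0 : y = 0 := by rw [hy, hs]; simp
        intro lam
        rw [hy0]
        simp
      · exfalso
        have := hxy (t / s)
        rw [hy, hx] at this
        have hcalc : x + (t / s) • ((-(s / t)) • x) = 0 := by
          have hc : (t / s) * (-(s / t)) = -1 := by field_simp
          rw [smul_smul, hc]
          module
        rw [hcalc, norm_zero] at this
        linarith
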